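/- Define the Berry–Plotkin function BP : 𝔹³ → 𝔹 by: BP(x) = tt if (⊥,tt,ff) ≤ x; BP(x) = ff if (tt,ff,⊥) ≤ x or (ff,⊥,tt) ≤ x; and BP(x) = ⊥ otherwise. Then BP is monotone, π₁(tr BP) = {(⊥,tt,ff), (tt,ff,⊥), (ff,⊥,tt)}, and cc(BP) = bcc(BP) = 3 (i.e. BP has presequentiality level (2,2)). -/
import Mathlib


/-- The flat boolean domain: `⊥`, `tt`, `ff`. -/
abbrev Bb : Type := WithBot Bool

/-- The flat (domain) order on `Bb`: `⊥` below everything, `tt` and `ff` incomparable. -/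
def bLE (a b : Bb) : Prop := a = ⊥ ∨ a = b

/-- Pointwise flat order on tuples. -/
def tupLE {k : ℕ} (x y : Fin k → Bb) : Prop := ∀ i, bLE (x i) (y i)

/-- Strict pointwise flat order on tuples. -/
def tupLT {k : ℕ} (x y : Fin k → Bb) : Prop := tupLE x y ∧ x ≠ y

/-- A first-order boolean function is monotone for the flat order. -/
def FlatMono {k : ℕ} (f : (Fin k → Bb) → Bb) : Prop :=
  ∀ x y, tupLE x y → bLE (f x) (f y)

/-- The presequentiality relation `P^n_{A,B}` (indices `0,…,n-1`). -/
def Preseq (n : ℕ) (A B : Finset ℕ) : Set (Fin n → Bb) :=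
  {d | (∃ i : Fin n, (i : ℕ) ∈ A ∧ d i = ⊥) ∨
       (∀ i j : Fin n, (i : ℕ) ∈ B → (j : ℕ) ∈ B → d i = d j)}

/-- `P^n_{m,m'}`: the presequentiality relation on initial segments. -/
def PreseqSeg (n m m' : ℕ) : Set (Fin n → Bb) :=
  Preseq n (Finset.range m) (Finset.range m')

/-- `f` (arity `k`) is invariant under an `n`-ary relation `R`. -/
def Invariant {k n : ℕ} (f : (Fin k → Bb) → Bb) (R : Set (Fin n → Bb)) : Prop :=
  ∀ x : Fin k → Fin n → Bb, (∀ m, x m ∈ R) →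
    (fun i => f (fun m => x m i)) ∈ R

/-- `π₁(tr f)`: the set of minimal points where `f` is defined. -/
def traceDom {k : ℕ} (f : (Fin k → Bb) → Bb) : Set (Fin k → Bb) :=
  {v | f v ≠ ⊥ ∧ ∀ v', tupLT v' v → f v' = ⊥}

/-- Linear coherence of a set of tuples. -/
def LinCoherent {k : ℕ} (S : Set (Fin k → Bb)) : Prop :=
  ∀ j : Fin k, (∀ v ∈ S, v j ≠ ⊥) → ∀ v ∈ S, ∀ w ∈ S, v j = w j

/-- The coefficient of coherence `cc(f) ∈ ℕ∞`. -/
noncomputable def cc {k : ℕ} (f : (Fin k → Bb) → Bb) : ℕ∞ :=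
  sInf {c : ℕ∞ | ∃ S : Finset (Fin k → Bb),
    ↑S ⊆ traceDom f ∧ 2 ≤ S.card ∧ LinCoherent (↑S : Set (Fin k → Bb)) ∧ c = (S.card : ℕ∞)}

/-- The bivalued coefficient of coherence `bcc(f) ∈ ℕ∞`. -/
noncomputable def bcc {k : ℕ} (f : (Fin k → Bb) → Bb) : ℕ∞ :=
  sInf {c : ℕ∞ | ∃ S : Finset (Fin k → Bb),
    ↑S ⊆ traceDom f ∧ 3 ≤ S.card ∧ LinCoherent (↑S : Set (Fin k → Bb)) ∧
    (∃ v ∈ S, f v = ((true : Bool) : Bb)) ∧ (∃ v ∈ S, f v = ((false : Bool) : Bb)) ∧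
    c = (S.card : ℕ∞)}

/-- M-sequentiality, by induction on the arity. -/
def MSeq : ∀ {k : ℕ}, ((Fin k → Bb) → Bb) → Prop
  | 0, f => ∃ b, ∀ x, f x = b
  | (k+1), f => (∃ b, ∀ x, f x = b) ∨
      ∃ i : Fin (k+1), (∀ x, x i = ⊥ → f x = ⊥) ∧
        ∀ c : Bool, MSeq (fun x : Fin k → Bb => f (i.insertNth (c : Bb) x))

/-- First trace element of the Berry–Plotkin function. -/
def bp1 : Fin 3 → Bb := ![⊥, ((true : Bool) : Bb), ((false : Bool) : Bb)]
/-- Second trace element of the Berry–Plotkin function. -/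
def bp2 : Fin 3 → Bb := ![((true : Bool) : Bb), ((false : Bool) : Bb), ⊥]
/-- Third trace element of the Berry–Plotkin function. -/
def bp3 : Fin 3 → Bb := ![((false : Bool) : Bb), ⊥, ((true : Bool) : Bb)]

open Classical in
/-- The Berry–Plotkin function. -/
noncomputable def BP : (Fin 3 → Bb) → Bb := fun x =>
  if tupLE bp1 x then ((true : Bool) : Bb)
  else if tupLE bp2 x ∨ tupLE bp3 x then ((false : Bool) : Bb)
  else ⊥


section Aux

lemma bLE_refl (a : Bb) : bLE a a := Or.inr rfl

lemma bLE_trans {a b c : Bb} (h1 : bLE a b) (h2 : bLE b c) : bLE a c := by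
  rcases h1 with h | h
  · exact Or.inl h
  · subst h; exact h2

lemma bLE_antisymm {a b : Bb} (h1 : bLE a b) (h2 : bLE b a) : a = b := by
  rcases h1 with h | h
  · rcases h2 with h' | h' <;> simp_all
  · exact h

lemma bLE_coe {b : Bool} {c : Bb} (h : bLE (↑b) c) : c = ↑b := by
  rcases h with h | h
  · simp at h
  · exact h.symm

lemma tupLE_refl {k : ℕ} (x : Fin k → Bb) : tupLE x x := fun _ => bLE_refl _

lemma tupLE_trans {k : ℕ} {x y z : Fin k → Bb} (h1 : tupLE x y) (h2 : tupLE y z) :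
    tupLE x z := fun i => bLE_trans (h1 i) (h2 i)

lemma tupLE_antisymm {k : ℕ} {x y : Fin k → Bb} (h1 : tupLE x y) (h2 : tupLE y x) : x = y :=
  funext fun i => bLE_antisymm (h1 i) (h2 i)

lemma clash {v : Fin 3 → Bb} {i : Fin 3} {b c : Bool} (hb : bLE (↑b) (v i))
    (hc : bLE (↑c) (v i)) (hbc : b ≠ c) : False := by
  have h1 := bLE_coe hb
  have h2 := bLE_coe hc
  rw [h1] at h2
  exact hbc (by exact_mod_cast h2)

lemma bp1_0 : bp1 0 = ⊥ := rfl
lemma bp1_1 : bp1 1 = ((true : Bool) : Bb) := rfl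
lemma bp1_2 : bp1 2 = ((false : Bool) : Bb) := rfl
lemma bp2_0 : bp2 0 = ((true : Bool) : Bb) := rfl
lemma bp2_1 : bp2 1 = ((false : Bool) : Bb) := rfl
lemma bp2_2 : bp2 2 = ⊥ := rfl
lemma bp3_0 : bp3 0 = ((false : Bool) : Bb) := rfl
lemma bp3_1 : bp3 1 = ⊥ := rfl
lemma bp3_2 : bp3 2 = ((true : Bool) : Bb) := rfl

lemma not_bp1_of_bp2 {v : Fin 3 → Bb} (h2 : tupLE bp2 v) : ¬ tupLE bp1 v := fun h1 =>
  clash (bp1_1 ▸ h1 1) (bp2_1 ▸ h2 1) (by decide)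

lemma not_bp1_of_bp3 {v : Fin 3 → Bb} (h3 : tupLE bp3 v) : ¬ tupLE bp1 v := fun h1 =>
  clash (bp1_2 ▸ h1 2) (bp3_2 ▸ h3 2) (by decide)

lemma BP_of_bp1 {v : Fin 3 → Bb} (h : tupLE bp1 v) : BP v = ((true : Bool) : Bb) := by
  unfold BP; rw [if_pos h]

lemma BP_of_bp2 {v : Fin 3 → Bb} (h : tupLE bp2 v) : BP v = ((false : Bool) : Bb) := by
  unfold BP; rw [if_neg (not_bp1_of_bp2 h), if_pos (Or.inl h)]

lemma BP_of_bp3 {v : Fin 3 → Bb} (h : tupLE bp3 v) : BP v = ((false : Bool) : Bb) := by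
  unfold BP; rw [if_neg (not_bp1_of_bp3 h), if_pos (Or.inr h)]

lemma BP_eq_bot {v : Fin 3 → Bb} (h1 : ¬ tupLE bp1 v) (h2 : ¬ tupLE bp2 v)
    (h3 : ¬ tupLE bp3 v) : BP v = ⊥ := by
  unfold BP
  rw [if_neg h1, if_neg (by tauto)]

lemma BP_ne_bot {v : Fin 3 → Bb} (h : BP v ≠ ⊥) :
    tupLE bp1 v ∨ tupLE bp2 v ∨ tupLE bp3 v := by
  by_contra hc
  push_neg at hc
  exact h (BP_eq_bot hc.1 hc.2.1 hc.2.2)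

lemma bp1_ne_bp2 : bp1 ≠ bp2 := fun h => by
  have := congrFun h 0; rw [bp1_0, bp2_0] at this; simp at this

lemma bp1_ne_bp3 : bp1 ≠ bp3 := fun h => by
  have := congrFun h 0; rw [bp1_0, bp3_0] at this; simp at this

lemma bp2_ne_bp3 : bp2 ≠ bp3 := fun h => by
  have := congrFun h 1; rw [bp2_1, bp3_1] at this; simp at this

lemma bp1_mem_trace : bp1 ∈ traceDom BP := by
  constructor
  · rw [BP_of_bp1 (tupLE_refl _)]; simp
  · rintro v' ⟨hle, hne⟩
    refine BP_eq_bot (fun h => hne (tupLE_antisymm hle h)) (fun h => ?_) (fun h => ?_)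
    · exact clash (bp2_1 ▸ (tupLE_trans h hle) 1) (Or.inr bp1_1.symm) (by decide)
    · exact clash (bp3_2 ▸ (tupLE_trans h hle) 2) (Or.inr bp1_2.symm) (by decide)

lemma bp2_mem_trace : bp2 ∈ traceDom BP := by
  constructor
  · rw [BP_of_bp2 (tupLE_refl _)]; simp
  · rintro v' ⟨hle, hne⟩
    refine BP_eq_bot (fun h => ?_) (fun h => hne (tupLE_antisymm hle h)) (fun h => ?_)
    · exact clash (bp1_1 ▸ (tupLE_trans h hle) 1) (Or.inr bp2_1.symm) (by decide)
    · exact clash (bp3_0 ▸ (tupLE_trans h hle) 0) (Or.inr bp2_0.symm) (by decide)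

lemma bp3_mem_trace : bp3 ∈ traceDom BP := by
  constructor
  · rw [BP_of_bp3 (tupLE_refl _)]; simp
  · rintro v' ⟨hle, hne⟩
    refine BP_eq_bot (fun h => ?_) (fun h => ?_) (fun h => hne (tupLE_antisymm hle h))
    · exact clash (bp1_2 ▸ (tupLE_trans h hle) 2) (Or.inr bp3_2.symm) (by decide)
    · exact clash (bp2_0 ▸ (tupLE_trans h hle) 0) (Or.inr bp3_0.symm) (by decide)

lemma traceDom_BP : traceDom BP = {bp1, bp2, bp3} := by
  ext v
  constructor
  · rintro ⟨hne, hmin⟩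
    rcases BP_ne_bot hne with h | h | h
    · left
      by_contra hv
      have := hmin bp1 ⟨h, fun he => hv he.symm⟩
      rw [BP_of_bp1 (tupLE_refl _)] at this; simp at this
    · right; left
      by_contra hv
      have := hmin bp2 ⟨h, fun he => hv he.symm⟩
      rw [BP_of_bp2 (tupLE_refl _)] at this; simp at this
    · right; right
      by_contra hv
      have := hmin bp3 ⟨h, fun he => hv he.symm⟩
      rw [BP_of_bp3 (tupLE_refl _)] at this; simp at this
  · rintro (rfl | rfl | rfl)
    · exact bp1_mem_trace
    · exact bp2_mem_trace
    · exact bp3_mem_trace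

lemma flatMono_BP : FlatMono BP := by
  intro x y hxy
  by_cases h1 : tupLE bp1 x
  · rw [BP_of_bp1 h1, BP_of_bp1 (tupLE_trans h1 hxy)]
    exact bLE_refl _
  · by_cases h2 : tupLE bp2 x
    · rw [BP_of_bp2 h2, BP_of_bp2 (tupLE_trans h2 hxy)]
      exact bLE_refl _
    · by_cases h3 : tupLE bp3 x
      · rw [BP_of_bp3 h3, BP_of_bp3 (tupLE_trans h3 hxy)]
        exact bLE_refl _
      · rw [BP_eq_bot h1 h2 h3]
        exact Or.inl rfl

/-- The canonical trace-domain finset. -/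
def bpT : Finset (Fin 3 → Bb) := {bp1, bp2, bp3}

lemma mem_bpT {v : Fin 3 → Bb} : v ∈ bpT ↔ v = bp1 ∨ v = bp2 ∨ v = bp3 := by
  simp [bpT]

lemma bpT_card : bpT.card = 3 := by
  unfold bpT
  rw [Finset.card_insert_of_notMem (by simp [bp1_ne_bp2, bp1_ne_bp3]),
    Finset.card_insert_of_notMem (by simp [bp2_ne_bp3]), Finset.card_singleton]

lemma bpT_sub : (↑bpT : Set (Fin 3 → Bb)) ⊆ traceDom BP := by
  rw [traceDom_BP]
  intro v hv
  simpa [bpT] using hv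

lemma bpT_coherent : LinCoherent (↑bpT : Set (Fin 3 → Bb)) := by
  intro j hj v hv w hw
  exfalso
  have h1 := hj bp1 (by simp [bpT])
  have h2 := hj bp2 (by simp [bpT])
  have h3 := hj bp3 (by simp [bpT])
  fin_cases j
  · exact h1 rfl
  · exact h3 rfl
  · exact h2 rfl

lemma card_le_three {S : Finset (Fin 3 → Bb)} (hsub : ↑S ⊆ traceDom BP) : S.card ≤ 3 := by
  have hss : S ⊆ bpT := fun u hu => by
    have := hsub (Finset.mem_coe.mpr hu)
    rw [traceDom_BP] at this
    exact mem_bpT.mpr (by simpa using this)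
  simpa [bpT_card] using Finset.card_le_card hss

lemma card_eq_three {S : Finset (Fin 3 → Bb)} (hsub : ↑S ⊆ traceDom BP)
    (hcard : 2 ≤ S.card) (hcoh : LinCoherent (↑S : Set (Fin 3 → Bb))) : S.card = 3 := by
  have hmem : ∀ u ∈ S, u = bp1 ∨ u = bp2 ∨ u = bp3 := fun u hu => by
    have := hsub (Finset.mem_coe.mpr hu)
    rw [traceDom_BP] at this
    simpa using this
  obtain ⟨v, hv, w, hw, hvw⟩ := Finset.one_lt_card.mp (lt_of_lt_of_le one_lt_two hcard)
  have h3 : bp3 ∈ S := by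
    by_contra h3
    have hm : ∀ u ∈ S, u = bp1 ∨ u = bp2 := fun u hu => by
      rcases hmem u hu with h | h | h
      · exact Or.inl h
      · exact Or.inr h
      · exact absurd (h ▸ hu) h3
    have hnb : ∀ u ∈ (↑S : Set (Fin 3 → Bb)), u 1 ≠ ⊥ := fun u hu => by
      rcases hm u (Finset.mem_coe.mp hu) with rfl | rfl
      · rw [bp1_1]; simp
      · rw [bp2_1]; simp
    have heq := hcoh 1 hnb v (Finset.mem_coe.mpr hv) w (Finset.mem_coe.mpr hw)
    rcases hm v hv with rfl | rfl <;> rcases hm w hw with rfl | rfl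
    · exact hvw rfl
    · rw [bp1_1, bp2_1] at heq; simp at heq
    · rw [bp1_1, bp2_1] at heq; simp at heq
    · exact hvw rfl
  have h1 : bp1 ∈ S := by
    by_contra h1
    have hm : ∀ u ∈ S, u = bp2 ∨ u = bp3 := fun u hu => by
      rcases hmem u hu with h | h | h
      · exact absurd (h ▸ hu) h1
      · exact Or.inl h
      · exact Or.inr h
    have hnb : ∀ u ∈ (↑S : Set (Fin 3 → Bb)), u 0 ≠ ⊥ := fun u hu => by
      rcases hm u (Finset.mem_coe.mp hu) with rfl | rfl
      · rw [bp2_0]; simp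
      · rw [bp3_0]; simp
    have heq := hcoh 0 hnb v (Finset.mem_coe.mpr hv) w (Finset.mem_coe.mpr hw)
    rcases hm v hv with rfl | rfl <;> rcases hm w hw with rfl | rfl
    · exact hvw rfl
    · rw [bp2_0, bp3_0] at heq; simp at heq
    · rw [bp2_0, bp3_0] at heq; simp at heq
    · exact hvw rfl
  have h2 : bp2 ∈ S := by
    by_contra h2
    have hm : ∀ u ∈ S, u = bp1 ∨ u = bp3 := fun u hu => by
      rcases hmem u hu with h | h | h
      · exact Or.inl h
      · exact absurd (h ▸ hu) h2
      · exact Or.inr h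
    have hnb : ∀ u ∈ (↑S : Set (Fin 3 → Bb)), u 2 ≠ ⊥ := fun u hu => by
      rcases hm u (Finset.mem_coe.mp hu) with rfl | rfl
      · rw [bp1_2]; simp
      · rw [bp3_2]; simp
    have heq := hcoh 2 hnb v (Finset.mem_coe.mpr hv) w (Finset.mem_coe.mpr hw)
    rcases hm v hv with rfl | rfl <;> rcases hm w hw with rfl | rfl
    · exact hvw rfl
    · rw [bp1_2, bp3_2] at heq; simp at heq
    · rw [bp1_2, bp3_2] at heq; simp at heq
    · exact hvw rfl
  have hss : bpT ⊆ S := fun u hu => by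
    rcases mem_bpT.mp hu with rfl | rfl | rfl <;> assumption
  have hge := Finset.card_le_card hss
  rw [bpT_card] at hge
  have hle := card_le_three hsub
  omega

end Aux

/-- the Berry–Plotkin function is monotone, its trace domain is
`{bp1, bp2, bp3}`, and `cc BP = bcc BP = 3`. -/
theorem stmt_19 :
    FlatMono BP ∧
    traceDom BP = {bp1, bp2, bp3} ∧
    cc BP = ((3 : ℕ) : ℕ∞) ∧ bcc BP = ((3 : ℕ) : ℕ∞) := by
  refine ⟨flatMono_BP, traceDom_BP, ?_, ?_⟩
  · refine le_antisymm ?_ ?_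
    · apply sInf_le
      exact ⟨bpT, bpT_sub, by rw [bpT_card]; norm_num, bpT_coherent, by rw [bpT_card]⟩
    · apply le_sInf
      rintro c ⟨S, hsub, hc2, hcoh, rfl⟩
      rw [card_eq_three hsub hc2 hcoh]
  · refine le_antisymm ?_ ?_
    · apply sInf_le
      refine ⟨bpT, bpT_sub, by rw [bpT_card], bpT_coherent,
        ⟨bp1, by simp [bpT], BP_of_bp1 (tupLE_refl _)⟩,
        ⟨bp2, by simp [bpT], BP_of_bp2 (tupLE_refl _)⟩, by rw [bpT_card]⟩
    · apply le_sInf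
      rintro c ⟨S, hsub, hc3, hcoh, -, -, rfl⟩
      have := card_le_three hsub
      have h : S.card = 3 := by omega
      rw [h]
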